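/- Let L be a relational first-order language, let K be a Fraïssé class of finite L-structures that is closed under free amalgamation of L-structures, and let M be a Fraïssé limit of K (M is countable, ultrahomogeneous, and its age is K). Then ⫫fa satisfies full existence for finite sets in M: for all finite subsets B, C ⊆ M and every finite tuple a in M, there is a tuple a' with a' ≡_C a and a' ⫫fa_C B. (Full existence for ⫫fa; from the proof of Proposition 3.3 for Example 3.4(1).) -/

import Mathlib

open FirstOrder FirstOrder.Language FirstOrder.Language.Structure Set

namespace Paper

/-- Free amalgamation independence: `A ⫫fa_C B` in the `L`-structure `M`. -/
def IndepFA (L : FirstOrder.Language) {M : Type*} [L.Structure M] (A B C : Set M) : Prop :=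
  A ∩ B ⊆ C ∧
    ∀ (n : ℕ) (R : L.Relations n) (x : Fin n → M),
      RelMap R x → (∀ i, x i ∈ A ∪ B ∪ C) →
        (∀ i, x i ∈ A ∪ C) ∨ (∀ i, x i ∈ B ∪ C)

/-- `a ≡_C b`: some automorphism of `M` fixes `C` pointwise and maps `a` to `b`
coordinatewise. -/
def EqAt (L : FirstOrder.Language) {M : Type*} [L.Structure M] (C : Set M)
    {ι : Type*} (a b : ι → M) : Prop :=
  ∃ σ : M ≃[L] M, (∀ c ∈ C, σ c = c) ∧ ∀ i, σ (a i) = b i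

/-- The induced `L`-structure on a subset of `M` (for a relational language). -/
def inducedOn (L : FirstOrder.Language) [L.IsRelational] {M : Type*} [L.Structure M]
    (A : Set M) : L.Structure A where
  funMap := fun f _ => isEmptyElim f
  RelMap := fun R x => RelMap R (fun i => (x i : M))

/-- `K` is closed under free amalgamation of `L`-structures: whenever a finite `L`-structure
`D` is covered by two subsets `A`, `B`, every relation of `D` holds entirely within `A` or
entirely within `B`, and the substructures induced on `A` and on `B` lie in `K`, then
`D ∈ K` (`D` is then the free amalgam of `A` and `B` over `A ∩ B`). -/
def ClosedUnderFreeAmalgamation (L : FirstOrder.Language) [L.IsRelational]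
    (K : Set (CategoryTheory.Bundled.{w} L.Structure)) : Prop :=
  ∀ D : CategoryTheory.Bundled.{w} L.Structure, Finite D →
    ∀ A B : Set D, A ∪ B = Set.univ →
      (∀ (n : ℕ) (R : L.Relations n) (x : Fin n → D),
        RelMap R x → (∀ i, x i ∈ A) ∨ (∀ i, x i ∈ B)) →
      (⟨A, inducedOn L A⟩ : CategoryTheory.Bundled L.Structure) ∈ K →
      (⟨B, inducedOn L B⟩ : CategoryTheory.Bundled L.Structure) ∈ K →
      D ∈ K

section Aux

variable {L : FirstOrder.Language} [L.IsRelational] {M : Type w} [L.Structure M]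

/-- A subset of a structure over a relational language is a substructure. -/
def setSub (L : FirstOrder.Language) [L.IsRelational] {M : Type w} [L.Structure M]
    (A : Set M) : L.Substructure M where
  carrier := A
  fun_mem := fun {n} f => isEmptyElim f

theorem setSub_fg (A : Set M) (hA : A.Finite) : (setSub L A).FG :=
  Substructure.fg_def.2 ⟨A, hA, le_antisymm (Substructure.closure_le.2 fun _ hx => hx)
    (fun _ hx => Substructure.subset_closure hx)⟩

/-- The projection from `↥P ⊕ ↥Q` to `M`. -/
def amalgPi {M : Type w} (P Q : Set M) : ↥P ⊕ ↥Q → M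
  | Sum.inl p => p
  | Sum.inr q => q

/-- The "A-side" of the free amalgam: the `inl`s together with the `inr`s coming from `C`. -/
def aSidePred {M : Type w} (C P Q : Set M) : ↥P ⊕ ↥Q → Prop
  | Sum.inl _ => True
  | Sum.inr q => (q : M) ∈ C

@[simp] theorem amalgPi_inl {P Q : Set M} (p : ↥P) : amalgPi P Q (Sum.inl p) = p := rfl
@[simp] theorem amalgPi_inr {P Q : Set M} (q : ↥Q) : amalgPi P Q (Sum.inr q) = q := rfl
@[simp] theorem aSidePred_inl {C P Q : Set M} (p : ↥P) :
    aSidePred C P Q (Sum.inl p) := trivial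
@[simp] theorem aSidePred_inr {C P Q : Set M} (q : ↥Q) :
    aSidePred C P Q (Sum.inr q) ↔ (q : M) ∈ C := Iff.rfl

/-- The free-amalgam structure on `↥P ⊕ ↥Q`: relations are those of `M` (via the
projection) lying entirely on the `A`-side or entirely on the `inr`-side. -/
def amalgStruct (C P Q : Set M) : L.Structure (↥P ⊕ ↥Q) where
  funMap := fun {n} f _ => isEmptyElim f
  RelMap := fun {n} R x =>
    ((∀ i, aSidePred C P Q (x i)) ∨ (∀ i, (x i).isRight)) ∧
      RelMap R (fun i => amalgPi P Q (x i))

/-- The map from `A ∪ C` into the amalgam `↥(A \ C) ⊕ ↥Q` (where `C ⊆ Q`). -/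
noncomputable def rho (A C Q : Set M) (hCQ : C ⊆ Q) (m : M) (hm : m ∈ A ∪ C) :
    ↥(A \ C) ⊕ ↥Q := by
  classical
  exact if h : m ∈ C then Sum.inr ⟨m, hCQ h⟩
    else Sum.inl ⟨m, ⟨Or.resolve_right ((Set.mem_union m A C).1 hm) h, h⟩⟩

theorem rho_of_mem {A C Q : Set M} (hCQ : C ⊆ Q) {m : M} (hm : m ∈ A ∪ C) (h : m ∈ C) :
    rho A C Q hCQ m hm = Sum.inr ⟨m, hCQ h⟩ := by
  simp [rho, h]

theorem rho_of_not_mem {A C Q : Set M} (hCQ : C ⊆ Q) {m : M} (hm : m ∈ A ∪ C) (h : m ∉ C) :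
    rho A C Q hCQ m hm =
      Sum.inl ⟨m, ⟨Or.resolve_right ((Set.mem_union m A C).1 hm) h, h⟩⟩ := by
  simp [rho, h]

@[simp] theorem amalgPi_rho {A C Q : Set M} (hCQ : C ⊆ Q) {m : M} (hm : m ∈ A ∪ C) :
    amalgPi (A \ C) Q (rho A C Q hCQ m hm) = m := by
  by_cases h : m ∈ C
  · rw [rho_of_mem hCQ hm h]; rfl
  · rw [rho_of_not_mem hCQ hm h]; rfl

theorem aSidePred_rho {A C Q : Set M} (hCQ : C ⊆ Q) {m : M} (hm : m ∈ A ∪ C) :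
    aSidePred C (A \ C) Q (rho A C Q hCQ m hm) := by
  by_cases h : m ∈ C
  · rw [rho_of_mem hCQ hm h]; exact h
  · rw [rho_of_not_mem hCQ hm h]; trivial

end Aux

/-- Full existence for `⫫fa` in a Fraïssé limit of a Fraïssé class of finite relational
structures closed under free amalgamation (from the proof of Proposition 3.3, for
Example 3.4(1)). -/
theorem indepFA_full_existence_fraisse_limit
    (L : FirstOrder.Language) [L.IsRelational] (M : Type w) [L.Structure M] [Countable M]
    (K : Set (CategoryTheory.Bundled.{w} L.Structure))
    (hFr : IsFraisse K) (hKfin : ∀ N ∈ K, Finite N)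
    (hfree : ClosedUnderFreeAmalgamation L K)
    (hhomog : L.IsUltrahomogeneous M) (hage : L.age M = K)
    (B C : Set M) (hB : B.Finite) (hC : C.Finite) {n : ℕ} (a : Fin n → M) :
    ∃ a' : Fin n → M, EqAt L C a a' ∧ IndepFA L (Set.range a') B C := by
  classical
  have hCQ : C ⊆ B ∪ C := Set.subset_union_right
  have hPfin : (Set.range a \ C).Finite := (Set.finite_range a).diff
  have hQfin : (B ∪ C).Finite := hB.union hC
  haveI : Finite ↥(Set.range a \ C) := hPfin.to_subtype
  haveI : Finite ↥(B ∪ C) := hQfin.to_subtype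
  letI instD : L.Structure (↥(Set.range a \ C) ⊕ ↥(B ∪ C)) :=
    amalgStruct C (Set.range a \ C) (B ∪ C)
  -- membership of a finite structure embeddable in `M` in `K`
  have mem_age : ∀ (N : CategoryTheory.Bundled.{w} L.Structure), Finite N →
      (N ↪[L] M) → N ∈ K := by
    intro N hfin e
    rw [← hage]
    haveI := hfin
    exact ⟨Structure.FG.of_finite, ⟨e⟩⟩
  -- the `A`-side induced structure is in `K`
  set AS : Set (↥(Set.range a \ C) ⊕ ↥(B ∪ C)) :=
    {d | aSidePred C (Set.range a \ C) (B ∪ C) d} with hAS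
  set BS : Set (↥(Set.range a \ C) ⊕ ↥(B ∪ C)) := {d | Sum.isRight d} with hBS
  have hAmem : (⟨↥AS, inducedOn L AS⟩ : CategoryTheory.Bundled.{w} L.Structure) ∈ K := by
    refine mem_age _ inferInstance ?_
    letI := inducedOn L AS
    refine ⟨⟨fun d => amalgPi _ _ d.1, ?_⟩, fun {k} f => isEmptyElim f, ?_⟩
    · rintro ⟨(p | q), hd⟩ ⟨(p' | q'), he⟩ h
      · simp only [amalgPi_inl] at h
        exact Subtype.ext (congrArg Sum.inl (Subtype.ext h))
      · simp only [amalgPi_inl, amalgPi_inr] at h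
        exact absurd (h ▸ (he : (q' : M) ∈ C)) p.2.2
      · simp only [amalgPi_inl, amalgPi_inr] at h
        exact absurd (h.symm ▸ (hd : (q : M) ∈ C)) p'.2.2
      · simp only [amalgPi_inr] at h
        exact Subtype.ext (congrArg Sum.inr (Subtype.ext h))
    · intro k R x
      exact ⟨fun h => ⟨Or.inl fun i => (x i).2, h⟩, fun h => h.2⟩
  -- the `B`-side induced structure is in `K`
  have hBmem : (⟨↥BS, inducedOn L BS⟩ : CategoryTheory.Bundled.{w} L.Structure) ∈ K := by
    refine mem_age _ inferInstance ?_
    letI := inducedOn L BS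
    refine ⟨⟨fun d => amalgPi _ _ d.1, ?_⟩, fun {k} f => isEmptyElim f, ?_⟩
    · rintro ⟨(p | q), hd⟩ ⟨(p' | q'), he⟩ h
      · exact Bool.noConfusion hd
      · exact Bool.noConfusion hd
      · exact Bool.noConfusion he
      · simp only [amalgPi_inr] at h
        exact Subtype.ext (congrArg Sum.inr (Subtype.ext h))
    · intro k R x
      exact ⟨fun h => ⟨Or.inr fun i => (x i).2, h⟩, fun h => h.2⟩
  -- the amalgam is in `K`, hence embeds into `M`
  have hDK : (⟨↥(Set.range a \ C) ⊕ ↥(B ∪ C), instD⟩ :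
      CategoryTheory.Bundled.{w} L.Structure) ∈ K := by
    refine hfree _ inferInstance AS BS ?_ ?_ hAmem hBmem
    · ext d
      simp only [Set.mem_union, Set.mem_univ, iff_true]
      cases d with
      | inl p => exact Or.inl trivial
      | inr q => exact Or.inr rfl
    · intro k R x hR
      exact hR.1.imp id id
  rw [← hage] at hDK
  obtain ⟨-, ⟨g0⟩⟩ := hDK
  -- adjust `g0` so that it is the identity on `B ∪ C`
  obtain ⟨σ₁, hσ₁⟩ := hhomog (setSub L (B ∪ C)) (setSub_fg _ hQfin)
    { toFun := fun s => g0 (Sum.inr ⟨s.1, s.2⟩)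
      inj' := fun s t h =>
        Subtype.ext (congrArg Subtype.val (Sum.inr_injective (g0.injective h)))
      map_fun' := fun {k} f => isEmptyElim f
      map_rel' := by
        intro k R x
        refine (g0.map_rel R fun i => Sum.inr ⟨(x i).1, (x i).2⟩).trans ?_
        exact ⟨fun h => h.2, fun h => ⟨Or.inr fun i => rfl, h⟩⟩ }
  set g : (↥(Set.range a \ C) ⊕ ↥(B ∪ C)) ↪[L] M := σ₁.symm.toEmbedding.comp g0 with hgdef
  have hpt : ∀ s : ↥(setSub L (B ∪ C)), g0 (Sum.inr ⟨s.1, s.2⟩) = σ₁ s.1 := by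
    intro s
    exact congr_fun (congrArg DFunLike.coe hσ₁) s
  have hg_inr : ∀ q : ↥(B ∪ C), g (Sum.inr q) = (q : M) := by
    intro q
    have h1 : g0 (Sum.inr q) = σ₁ (q : M) := hpt ⟨(q : M), q.2⟩
    show σ₁.symm (g0 (Sum.inr q)) = (q : M)
    rw [h1]; exact σ₁.symm_apply_apply _
  have hπg : ∀ d, g d = σ₁.symm (g0 d) := fun d => rfl
  -- get the automorphism
  obtain ⟨σ, hσ⟩ := hhomog (setSub L (Set.range a ∪ C))
    (setSub_fg _ ((Set.finite_range a).union hC))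
    { toFun := fun t => g (rho (Set.range a) C (B ∪ C) hCQ t.1 t.2)
      inj' := by
        intro s t h
        have h2 : rho (Set.range a) C (B ∪ C) hCQ s.1 s.2
            = rho (Set.range a) C (B ∪ C) hCQ t.1 t.2 := g.injective h
        have h3 := congrArg (amalgPi (Set.range a \ C) (B ∪ C)) h2
        exact Subtype.ext ((amalgPi_rho (A := Set.range a) (C := C) (Q := B ∪ C) hCQ s.2).symm.trans
          (h3.trans (amalgPi_rho (A := Set.range a) (C := C) (Q := B ∪ C) hCQ t.2)))
      map_fun' := fun {k} f => isEmptyElim f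
      map_rel' := by
        intro k R x
        have e : ∀ i, amalgPi (Set.range a \ C) (B ∪ C)
            (rho (Set.range a) C (B ∪ C) hCQ (x i).1 (x i).2) = (x i).1 :=
          fun i => amalgPi_rho hCQ (x i).2
        refine (g.map_rel R fun i => rho (Set.range a) C (B ∪ C) hCQ (x i).1 (x i).2).trans ?_
        constructor
        · intro h
          have h2 := h.2
          simp only [e] at h2
          exact h2
        · intro h
          refine ⟨Or.inl fun i => aSidePred_rho hCQ _, ?_⟩
          simp only [e]
          exact h }
  have hσval : ∀ (m : M) (hm : m ∈ Set.range a ∪ C),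
      σ m = g (rho (Set.range a) C (B ∪ C) hCQ m hm) := by
    intro m hm
    exact (congr_fun (congrArg DFunLike.coe hσ) ⟨m, hm⟩).symm
  have hσC : ∀ c ∈ C, σ c = c := by
    intro c hc
    rw [hσval c (Set.mem_union_right _ hc), rho_of_mem hCQ _ hc]
    exact hg_inr _
  refine ⟨fun i => σ (a i), ⟨σ, hσC, fun i => rfl⟩, ?_, ?_⟩
  · -- range a' ∩ B ⊆ C
    rintro m ⟨⟨i, hi⟩, hmB⟩
    have hi' : σ (a i) = m := hi
    have hm1 : m = g (rho (Set.range a) C (B ∪ C) hCQ (a i) (Set.mem_union_left _ (Set.mem_range_self i))) := by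
      rw [← hi']; exact hσval _ _
    have hm2 : m = g (Sum.inr ⟨m, Or.inl hmB⟩) := (hg_inr ⟨m, Or.inl hmB⟩).symm
    have heq : rho (Set.range a) C (B ∪ C) hCQ (a i) (Set.mem_union_left _ (Set.mem_range_self i))
        = Sum.inr ⟨m, Or.inl hmB⟩ := g.injective (hm1.symm.trans hm2)
    by_cases h : a i ∈ C
    · rw [rho_of_mem hCQ _ h] at heq
      have : a i = m := congrArg Subtype.val (Sum.inr_injective heq)
      exact this ▸ h
    · rw [rho_of_not_mem hCQ _ h] at heq
      exact absurd heq (by simp)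
  · -- relations split
    intro k R x hR hx
    have hy : ∀ i, ∃ d : ↥(Set.range a \ C) ⊕ ↥(B ∪ C), g d = x i := by
      intro i
      rcases hx i with (h | h) | h
      · obtain ⟨j, hj⟩ := h
        have hj' : σ (a j) = x i := hj
        exact ⟨rho (Set.range a) C (B ∪ C) hCQ (a j) (Set.mem_union_left _ (Set.mem_range_self j)),
          (hσval (a j) (Set.mem_union_left _ (Set.mem_range_self j))).symm.trans hj'⟩
      · exact ⟨Sum.inr ⟨x i, Or.inl h⟩, hg_inr _⟩
      · exact ⟨Sum.inr ⟨x i, Or.inr h⟩, hg_inr _⟩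
    choose y hyx using hy
    have hRd : RelMap R y := by
      refine (g.map_rel R y).1 ?_
      have hgy : ⇑g ∘ y = x := funext hyx
      rw [hgy]
      exact hR
    rcases hRd.1 with h | h
    · left
      intro i
      cases hyi : y i with
      | inl p =>
        obtain ⟨j, hj⟩ := p.2.1
        left
        refine ⟨j, ?_⟩
        have hnc : a j ∉ C := by rw [hj]; exact p.2.2
        show σ (a j) = x i
        rw [hσval (a j) (Set.mem_union_left _ (Set.mem_range_self j))]
        have hre : rho (Set.range a) C (B ∪ C) hCQ (a j) (Set.mem_union_left _ (Set.mem_range_self j)) = Sum.inl p := by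
          rw [rho_of_not_mem hCQ _ hnc]
          exact congrArg Sum.inl (Subtype.ext hj)
        rw [hre, ← hyi, hyx]
      | inr q =>
        have hq : (q : M) ∈ C := by have h' := h i; rw [hyi] at h'; exact h'
        right
        have hxq : x i = (q : M) := by rw [← hyx i, hyi, hg_inr]
        exact hxq ▸ hq
    · right
      intro i
      have hri := h i
      cases hyi : y i with
      | inl p => rw [hyi] at hri; simp at hri
      | inr q =>
        have hxq : x i = (q : M) := by rw [← hyx i, hyi, hg_inr]
        rw [hxq]
        exact q.2

end Paper
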